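/- arXiv:2310.02384 — 3 statements merged into one kernel-verified Lean document; each statement's English description precedes it below -/
import Mathlib

section
/- Let f : ℝⁿ → ℝ be γ-strongly convex and differentiable, let G ∈ ℝ^{m×n}, and for λ, λ' ∈ ℝ^m let y = argmin_x (f(x) + ⟨λ, Gx⟩) and y' = argmin_x (f(x) + ⟨λ', Gx⟩). Then ‖y − y'‖ ≤ (‖G‖₂/γ)·‖λ − λ'‖, where ‖G‖₂ is the operator norm of G. -/
open RealInnerProductSpace

lemma grad_zero_of_min {E : Type*} [NormedAddCommGroup E] [InnerProductSpace ℝ E]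
    [CompleteSpace E] (f : E → ℝ) (gy c y : E) (hg : HasGradientAt f gy y)
    (hmin : ∀ x, f y + ⟪c, y⟫ ≤ f x + ⟪c, x⟫) : gy + c = 0 := by
  have h1 : HasFDerivAt (fun x => f x + ⟪c, x⟫)
      ((InnerProductSpace.toDual ℝ E gy : E →L[ℝ] ℝ) + innerSL ℝ c) y :=
    hg.hasFDerivAt.add (innerSL ℝ c).hasFDerivAt
  have h2 : IsLocalMin (fun x => f x + ⟪c, x⟫) y :=
    Filter.Eventually.of_forall fun x => hmin x
  have h3 := h2.hasFDerivAt_eq_zero h1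
  have h4 : ⟪gy + c, gy + c⟫ = 0 := by
    have := congrFun (congrArg DFunLike.coe h3) (gy + c)
    rw [inner_add_left]
    simpa [inner_add_left, InnerProductSpace.toDual_apply_apply] using this
  exact inner_self_eq_zero.mp h4

/-- Sensitivity of the minimizer of `f(x) + ⟪λ, G x⟫` with respect to the dual variable. -/
theorem stmt_3 {n m : ℕ}
    (f : EuclideanSpace ℝ (Fin n) → ℝ) (g : EuclideanSpace ℝ (Fin n) → EuclideanSpace ℝ (Fin n))
    (γ : ℝ) (hγ : 0 < γ)
    (hgrad : ∀ x, HasGradientAt f (g x) x)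
    (hsc : ∀ x y, f x ≥ f y + ⟪g y, x - y⟫ + γ / 2 * ‖x - y‖ ^ 2)
    (G : EuclideanSpace ℝ (Fin n) →L[ℝ] EuclideanSpace ℝ (Fin m))
    (l l' : EuclideanSpace ℝ (Fin m)) (y y' : EuclideanSpace ℝ (Fin n))
    (hy : ∀ x, f y + ⟪l, G y⟫ ≤ f x + ⟪l, G x⟫)
    (hy' : ∀ x, f y' + ⟪l', G y'⟫ ≤ f x + ⟪l', G x⟫) :
    ‖y - y'‖ ≤ ‖G‖ / γ * ‖l - l'‖ := by
  set A := ContinuousLinearMap.adjoint G with hA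
  have hadj : ∀ (u : EuclideanSpace ℝ (Fin m)) (x : EuclideanSpace ℝ (Fin n)),
      ⟪u, G x⟫ = ⟪A u, x⟫ := fun u x => (ContinuousLinearMap.adjoint_inner_left G x u).symm
  have hz : g y + A l = 0 := by
    apply grad_zero_of_min f (g y) (A l) y (hgrad y)
    intro x
    simpa [hadj] using hy x
  have hz' : g y' + A l' = 0 := by
    apply grad_zero_of_min f (g y') (A l') y' (hgrad y')
    intro x
    simpa [hadj] using hy' x
  -- strong monotonicity
  have h1 := hsc y' y
  have h2 := hsc y y'
  have hnorm : ‖y' - y‖ = ‖y - y'‖ := by rw [← norm_neg]; congr 1; abel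
  rw [hnorm] at h1
  have e0 : y' - y = -(y - y') := by abel
  have e1 : ⟪g y, y' - y⟫ = -⟪g y, y - y'⟫ := by rw [e0, inner_neg_right]
  rw [e1] at h1
  have hmono : γ * ‖y - y'‖ ^ 2 ≤ ⟪g y - g y', y - y'⟫ := by
    rw [inner_sub_left]
    linarith
  have hgy : g y = -(A l) := eq_neg_of_add_eq_zero_left hz
  have hgy' : g y' = -(A l') := eq_neg_of_add_eq_zero_left hz'
  have e2 : g y - g y' = A (l' - l) := by rw [hgy, hgy', map_sub]; abel
  have hbound : ⟪g y - g y', y - y'⟫ ≤ ‖G‖ * ‖l - l'‖ * ‖y - y'‖ := by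
    rw [e2, ← hadj]
    calc ⟪l' - l, G (y - y')⟫ ≤ ‖l' - l‖ * ‖G (y - y')‖ := real_inner_le_norm _ _
      _ ≤ ‖l' - l‖ * (‖G‖ * ‖y - y'‖) := by
          exact mul_le_mul_of_nonneg_left (G.le_opNorm _) (norm_nonneg _)
      _ = ‖G‖ * ‖l - l'‖ * ‖y - y'‖ := by rw [norm_sub_rev]; ring
  have key : γ * ‖y - y'‖ ^ 2 ≤ ‖G‖ * ‖l - l'‖ * ‖y - y'‖ := le_trans hmono hbound
  rcases eq_or_lt_of_le (norm_nonneg (y - y')) with h0 | h0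
  · rw [← h0]
    positivity
  · rw [div_mul_eq_mul_div, le_div_iff₀ hγ]
    nlinarith
end

section
/- Let G ∈ ℝ^{m×n} with GGᵀ positive definite, γ ≤ β_x real numbers with γ > 0, and define γ_d = λ_min(GGᵀ)/β_x and L_{x*} = √(β_x/(γ·λ_min(GGᵀ))). Then for any ε, ε_g, β_z ≥ 0: (1/(2γ_d))·(εβ_z‖G‖₂/γ + ε_g)·(1 + εβ_z‖G‖₂/γ² + ‖G‖₂²/γ²) ≥ εβ_z/γ + L_{x*}·ε_g. Consequently, the sufficient condition for RDA convergence implies the sufficient condition for RCM convergence. -/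
/-- The RDA sufficient condition dominates the RCM sufficient condition.
Here `normG` denotes the largest singular value `‖G‖₂` of `G` and `lmin` the smallest
eigenvalue `λ_min(GGᵀ)` of `GGᵀ`, which is positive (`GGᵀ` positive definite) and
satisfies `lmin ≤ normG²`. -/
theorem stmt_6 (normG lmin γ βx ε εg βz : ℝ)
    (hnormG : 0 ≤ normG) (hlmin : 0 < lmin) (hle : lmin ≤ normG ^ 2)
    (hγ : 0 < γ) (hγβ : γ ≤ βx)
    (hε : 0 ≤ ε) (hεg : 0 ≤ εg) (hβz : 0 ≤ βz) :
    1 / (2 * (lmin / βx)) * (ε * βz * normG / γ + εg) *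
        (1 + ε * βz * normG / γ ^ 2 + normG ^ 2 / γ ^ 2)
      ≥ ε * βz / γ + Real.sqrt (βx / (γ * lmin)) * εg := by
  have hβx : 0 < βx := lt_of_lt_of_le hγ hγβ
  have hN : 0 < normG := by nlinarith
  set s := Real.sqrt (βx / (γ * lmin)) with hsdef
  have hs0 : 0 ≤ s := Real.sqrt_nonneg _
  have hs2 : s ^ 2 = βx / (γ * lmin) := Real.sq_sqrt (by positivity)
  have hprod : (s * (lmin * γ)) ^ 2 = βx * (lmin * γ) := by
    rw [mul_pow, hs2]; field_simp
  have h2 : γ * lmin ≤ βx * normG ^ 2 := by nlinarith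
  have hkey : s * (lmin * γ) ≤ βx * normG := by
    nlinarith [hprod, mul_pos hβx (mul_pos hlmin hγ),
      mul_nonneg hs0 (mul_pos hlmin hγ).le, mul_nonneg hβx.le hN.le]
  rw [ge_iff_le, ← sub_nonneg]
  have h1 : 1 / (2 * (lmin / βx)) = βx / (2 * lmin) := by field_simp
  rw [h1]
  have hA : 0 ≤ ε * βz := mul_nonneg hε hβz
  have expand : βx / (2 * lmin) * (ε * βz * normG / γ + εg) *
        (1 + ε * βz * normG / γ ^ 2 + normG ^ 2 / γ ^ 2) - (ε * βz / γ + s * εg)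
      = (βx * (ε * βz * normG + εg * γ) * (γ ^ 2 + ε * βz * normG + normG ^ 2)
          - (ε * βz * γ ^ 2 + s * εg * γ ^ 3) * (2 * lmin)) / (2 * lmin * γ ^ 3) := by
    field_simp
  rw [expand]
  apply div_nonneg _ (by positivity)
  nlinarith [mul_nonneg (mul_nonneg hA (mul_nonneg hβx.le hN.le)) (sq_nonneg (γ - normG)),
    mul_nonneg (mul_nonneg hA (by positivity : (0:ℝ) ≤ 2 * γ)) (sub_nonneg.2 h2),
    mul_nonneg (mul_nonneg hεg (mul_nonneg hβx.le hγ.le)) (sq_nonneg (γ - normG)),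
    mul_nonneg (mul_nonneg hεg (by positivity : (0:ℝ) ≤ 2 * γ ^ 2)) (sub_nonneg.2 hkey),
    mul_nonneg (mul_nonneg (sq_nonneg (ε * βz)) hβx.le) (sq_nonneg normG),
    mul_nonneg (mul_nonneg (mul_nonneg hβx.le hεg) hγ.le) (mul_nonneg hA hN.le)]
end

section
/- Let d : ℝ^m → ℝ be γ_d-strongly concave and differentiable, and let λ* satisfy λ* = [λ* + η·∇d(λ*)]₊ (i.e., λ* is a fixed point of projected gradient ascent onto the nonnegative orthant). Let g : ℝ^m → ℝ^m be another vector field with ‖g(λ) − ∇d(λ)‖ ≤ δ for all λ, and suppose ∇d is L_d-Lipschitz. Then for the update λ⁺ = [λ + η·g(λ)]₊: ‖λ⁺ − λ*‖² ≤ (1 − 2ηγ_d + η²L_d²)·‖λ − λ*‖² + (2η + 2η²L_d)·δ·‖λ − λ*‖ + η²δ². -/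
open RealInnerProductSpace

lemma pos_nonexp {m : ℕ} (pos : EuclideanSpace ℝ (Fin m) → EuclideanSpace ℝ (Fin m))
    (hpos : ∀ v i, pos v i = max (v i) 0) (a b : EuclideanSpace ℝ (Fin m)) :
    ‖pos a - pos b‖ ≤ ‖a - b‖ := by
  rw [EuclideanSpace.norm_eq, EuclideanSpace.norm_eq]
  apply Real.sqrt_le_sqrt
  apply Finset.sum_le_sum
  intro i _
  have h1 : (pos a - pos b) i = max (a i) 0 - max (b i) 0 := by
    simp [hpos]
  have h2 : (a - b) i = a i - b i := by simp
  rw [h1, h2, Real.norm_eq_abs, Real.norm_eq_abs]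
  have := abs_max_sub_max_le_abs (a i) (b i) 0
  exact pow_le_pow_left₀ (abs_nonneg _) this 2

/-- Inexact projected gradient ascent contraction for a strongly concave smooth dual function. -/
theorem stmt_16 {m : ℕ}
    (d : EuclideanSpace ℝ (Fin m) → ℝ) (D : EuclideanSpace ℝ (Fin m) → EuclideanSpace ℝ (Fin m))
    (γd Ld δ η : ℝ) (hγd : 0 < γd) (hLd : 0 ≤ Ld) (hδ : 0 ≤ δ) (hη : 0 ≤ η)
    (hgrad : ∀ l, HasGradientAt d (D l) l)
    (hconc : ∀ a b, d a ≤ d b + ⟪D b, a - b⟫ - γd / 2 * ‖a - b‖ ^ 2)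
    (hlip : ∀ a b, ‖D a - D b‖ ≤ Ld * ‖a - b‖)
    (g : EuclideanSpace ℝ (Fin m) → EuclideanSpace ℝ (Fin m))
    (hg : ∀ l, ‖g l - D l‖ ≤ δ)
    (pos : EuclideanSpace ℝ (Fin m) → EuclideanSpace ℝ (Fin m))
    (hpos : ∀ v i, pos v i = max (v i) 0)
    (lstar l : EuclideanSpace ℝ (Fin m))
    (hfix : lstar = pos (lstar + η • D lstar)) :
    ‖pos (l + η • g l) - lstar‖ ^ 2 ≤
      (1 - 2 * η * γd + η ^ 2 * Ld ^ 2) * ‖l - lstar‖ ^ 2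
        + (2 * η + 2 * η ^ 2 * Ld) * δ * ‖l - lstar‖ + η ^ 2 * δ ^ 2 := by
  set x := l - lstar with hx
  set u := D l - D lstar with hu
  set N := ‖x‖ with hN
  have hN0 : 0 ≤ N := norm_nonneg _
  -- strong monotonicity
  have hmono : ⟪x, u⟫ ≤ -γd * N ^ 2 := by
    have h1 := hconc l lstar
    have h2 := hconc lstar l
    have hnr : ‖lstar - l‖ = ‖l - lstar‖ := norm_sub_rev _ _
    have hin : ⟪D l, lstar - l⟫ = -⟪D l, l - lstar⟫ := by
      rw [← inner_neg_right]; congr 1; abel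
    have hsum : 0 ≤ ⟪D lstar, l - lstar⟫ - ⟪D l, l - lstar⟫ - γd * ‖l - lstar‖ ^ 2 := by
      rw [hnr, hin] at h2; linarith
    have : ⟪x, u⟫ = ⟪D l, l - lstar⟫ - ⟪D lstar, l - lstar⟫ := by
      rw [hx, hu, inner_sub_right, real_inner_comm (l - lstar) (D l),
        real_inner_comm (l - lstar) (D lstar)]
    rw [this, hN, hx]; linarith
  have hulip : ‖u‖ ≤ Ld * N := hlip l lstar
  -- the exact step distance
  set A := ‖x + η • u‖ with hA
  have hA0 : 0 ≤ A := norm_nonneg _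
  have hAsq : A ^ 2 ≤ (1 - 2 * η * γd + η ^ 2 * Ld ^ 2) * N ^ 2 := by
    have hexp : A ^ 2 = N ^ 2 + 2 * (η * ⟪x, u⟫) + η ^ 2 * ‖u‖ ^ 2 := by
      rw [hA, hN, norm_add_sq_real, real_inner_smul_right, norm_smul]
      simp [mul_pow, abs_of_nonneg hη]
    have husq : ‖u‖ ^ 2 ≤ Ld ^ 2 * N ^ 2 := by
      nlinarith [norm_nonneg u]
    have hx2 : η * ⟪x, u⟫ ≤ η * (-γd * N ^ 2) := by
      exact mul_le_mul_of_nonneg_left hmono hη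
    nlinarith [sq_nonneg η]
  have hAle : A ≤ (1 + η * Ld) * N := by
    calc A ≤ ‖x‖ + ‖η • u‖ := norm_add_le _ _
      _ = N + η * ‖u‖ := by rw [norm_smul, Real.norm_eq_abs, abs_of_nonneg hη]
      _ ≤ N + η * (Ld * N) := by nlinarith [mul_le_mul_of_nonneg_left hulip hη]
      _ = (1 + η * Ld) * N := by ring
  -- nonexpansive projection
  have hkey : ‖pos (l + η • g l) - lstar‖ ≤ A + η * δ := by
    calc ‖pos (l + η • g l) - lstar‖
        = ‖pos (l + η • g l) - pos (lstar + η • D lstar)‖ := by rw [← hfix]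
      _ ≤ ‖(l + η • g l) - (lstar + η • D lstar)‖ := pos_nonexp pos hpos _ _
      _ = ‖(x + η • u) + η • (g l - D l)‖ := by
          congr 1; rw [hx, hu]
          module
      _ ≤ ‖x + η • u‖ + ‖η • (g l - D l)‖ := norm_add_le _ _
      _ ≤ A + η * δ := by
          rw [norm_smul, Real.norm_eq_abs, abs_of_nonneg hη]
          exact add_le_add le_rfl (mul_le_mul_of_nonneg_left (hg l) hη)
  have hP0 : 0 ≤ ‖pos (l + η • g l) - lstar‖ := norm_nonneg _
  have hηδ : 0 ≤ η * δ := mul_nonneg hη hδ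
  nlinarith [sq_nonneg (A + η * δ), mul_le_mul_of_nonneg_left hAle hηδ]
end
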